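/- With u_i = u(·,λ_i) as in the mass matrix identity, the stiffness form satisfies ∫₀ᴸ (u_i' u_j' + p u_i u_j) dx = (λ_j F(λ_j) - λ_i F(λ_i))/(λ_j - λ_i) for λ_i ≠ λ_j. -/

import Mathlib

open intervalIntegral Set

private lemma weak_form (L : ℝ) (hL : 0 < L) (p g : ℝ → ℝ)
    (hp : ContinuousOn p (Icc 0 L)) (hg : Continuous g) (lam : ℝ)
    (u v : ℝ → ℝ) (hu : ContDiff ℝ 2 u) (hv : ContDiff ℝ 2 v)
    (heq : ∀ x ∈ Icc 0 L, -(deriv (deriv u) x) + p x * u x + lam * u x = g x)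
    (hbc0 : deriv u 0 = 0) (hbcL : deriv u L = 0) :
    (∫ x in (0:ℝ)..L, (deriv u x * deriv v x + p x * u x * v x))
      + lam * ∫ x in (0:ℝ)..L, u x * v x = ∫ x in (0:ℝ)..L, g x * v x := by
  have hIcc : uIcc (0:ℝ) L = Icc 0 L := uIcc_of_le hL.le
  have hu0 : Continuous u := hu.continuous
  have hv0 : Continuous v := hv.continuous
  have hu1 : Continuous (deriv u) := hu.continuous_deriv one_le_two
  have hv1 : Continuous (deriv v) := hv.continuous_deriv one_le_two
  have hud : ContDiff ℝ 1 (deriv u) := by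
    have := (contDiff_succ_iff_deriv (n := 1)).mp hu
    exact this.2.2
  have hu2 : Continuous (deriv (deriv u)) := hud.continuous_deriv le_rfl
  -- integration by parts : ∫ v * u'' = - ∫ v' * u'
  have ibp : (∫ x in (0:ℝ)..L, v x * deriv (deriv u) x)
      = - ∫ x in (0:ℝ)..L, deriv v x * deriv u x := by
    have h := intervalIntegral.integral_mul_deriv_eq_deriv_mul
      (u := v) (u' := deriv v) (v := deriv u) (v' := deriv (deriv u))
      (a := (0:ℝ)) (b := L)
      (fun x _ => (hv.differentiable two_ne_zero).differentiableAt.hasDerivAt)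
      (fun x _ => (hud.differentiable one_ne_zero).differentiableAt.hasDerivAt)
      (hv1.intervalIntegrable _ _) (hu2.intervalIntegrable _ _)
    rw [h, hbc0, hbcL]
    ring
  have hcong : (∫ x in (0:ℝ)..L, g x * v x)
      = ∫ x in (0:ℝ)..L, ((-(deriv (deriv u) x) + p x * u x + lam * u x) * v x) := by
    apply intervalIntegral.integral_congr
    intro x hx
    rw [hIcc] at hx
    show g x * v x = (-(deriv (deriv u) x) + p x * u x + lam * u x) * v x
    rw [heq x hx]
  rw [hcong]
  have h1 : IntervalIntegrable (fun x => -(deriv (deriv u) x) * v x) MeasureTheory.volume 0 L :=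
    ((hu2.neg).mul hv0).intervalIntegrable _ _
  have h2 : IntervalIntegrable (fun x => p x * u x * v x) MeasureTheory.volume 0 L := by
    apply ContinuousOn.intervalIntegrable
    rw [hIcc]
    exact (hp.mul hu0.continuousOn).mul hv0.continuousOn
  have h3 : IntervalIntegrable (fun x => lam * u x * v x) MeasureTheory.volume 0 L :=
    ((continuous_const.mul hu0).mul hv0).intervalIntegrable _ _
  have hsplit : (∫ x in (0:ℝ)..L, ((-(deriv (deriv u) x) + p x * u x + lam * u x) * v x))
      = (∫ x in (0:ℝ)..L, -(deriv (deriv u) x) * v x)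
        + (∫ x in (0:ℝ)..L, p x * u x * v x)
        + ∫ x in (0:ℝ)..L, lam * u x * v x := by
    rw [← intervalIntegral.integral_add h1 h2, ← intervalIntegral.integral_add (h1.add h2) h3]
    apply intervalIntegral.integral_congr
    intro x _
    ring
  rw [hsplit]
  have e1 : (∫ x in (0:ℝ)..L, -(deriv (deriv u) x) * v x)
      = ∫ x in (0:ℝ)..L, deriv u x * deriv v x := by
    have : (∫ x in (0:ℝ)..L, -(deriv (deriv u) x) * v x)
        = - ∫ x in (0:ℝ)..L, v x * deriv (deriv u) x := by
      rw [← intervalIntegral.integral_neg]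
      apply intervalIntegral.integral_congr
      intro x _; ring
    rw [this, ibp, neg_neg]
    apply intervalIntegral.integral_congr
    intro x _; ring
  have e3 : (∫ x in (0:ℝ)..L, lam * u x * v x) = lam * ∫ x in (0:ℝ)..L, u x * v x := by
    rw [← intervalIntegral.integral_const_mul]
    apply intervalIntegral.integral_congr
    intro x _; ring
  rw [e1, e3]
  have hsum : (∫ x in (0:ℝ)..L, (deriv u x * deriv v x + p x * u x * v x))
      = (∫ x in (0:ℝ)..L, deriv u x * deriv v x) + ∫ x in (0:ℝ)..L, p x * u x * v x := by
    apply intervalIntegral.integral_add ((hu1.mul hv1).intervalIntegrable _ _) h2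
  rw [hsum]

theorem stiffness_matrix_offdiagonal
    (L : ℝ) (hL : 0 < L) (p g : ℝ → ℝ)
    (hp : ContinuousOn p (Icc 0 L)) (hp0 : ∀ x ∈ Icc 0 L, 0 ≤ p x)
    (hg : Continuous g)
    (lami lamj : ℝ) (hlami : 0 < lami) (hlamj : 0 < lamj) (hij : lami ≠ lamj)
    (ui uj : ℝ → ℝ) (hui : ContDiff ℝ 2 ui) (huj : ContDiff ℝ 2 uj)
    (heqi : ∀ x ∈ Icc 0 L, -(deriv (deriv ui) x) + p x * ui x + lami * ui x = g x)
    (heqj : ∀ x ∈ Icc 0 L, -(deriv (deriv uj) x) + p x * uj x + lamj * uj x = g x)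
    (hbci0 : deriv ui 0 = 0) (hbciL : deriv ui L = 0)
    (hbcj0 : deriv uj 0 = 0) (hbcjL : deriv uj L = 0) :
    ∫ x in (0:ℝ)..L, (deriv ui x * deriv uj x + p x * ui x * uj x) =
      (lamj * (∫ x in (0:ℝ)..L, g x * uj x) - lami * ∫ x in (0:ℝ)..L, g x * ui x) /
        (lamj - lami) := by
  have Wi := weak_form L hL p g hp hg lami ui uj hui huj heqi hbci0 hbciL
  have Wj := weak_form L hL p g hp hg lamj uj ui huj hui heqj hbcj0 hbcjL
  -- convert Wj's integrands to match
  have hswapS : (∫ x in (0:ℝ)..L, (deriv uj x * deriv ui x + p x * uj x * ui x))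
      = ∫ x in (0:ℝ)..L, (deriv ui x * deriv uj x + p x * ui x * uj x) := by
    apply intervalIntegral.integral_congr; intro x _; ring
  have hswapM : (∫ x in (0:ℝ)..L, uj x * ui x) = ∫ x in (0:ℝ)..L, ui x * uj x := by
    apply intervalIntegral.integral_congr; intro x _; ring
  rw [hswapS, hswapM] at Wj
  set S := ∫ x in (0:ℝ)..L, (deriv ui x * deriv uj x + p x * ui x * uj x)
  set M := ∫ x in (0:ℝ)..L, ui x * uj x
  set A := ∫ x in (0:ℝ)..L, g x * ui x
  set B := ∫ x in (0:ℝ)..L, g x * uj x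
  have hd : lamj - lami ≠ 0 := sub_ne_zero.mpr (Ne.symm hij)
  field_simp
  -- S + lami * M = B, S + lamj * M = A
  nlinarith [Wi, Wj]
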